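/- Let $M = \mathbb{Z}$ be regarded as a representation of the group $\mathbb{Z}$ where $n \in \mathbb{Z}$ acts by multiplication by $(-1)^n$ (the sign action). Then the first group cohomology $H^1(\mathbb{Z}, M)$ is isomorphic (as an abelian group) to $\mathbb{Z}/2\mathbb{Z}$. -/

import Mathlib

/-- The sign representation of the group `ℤ` (written multiplicatively as
`Multiplicative ℤ`) on a `ℤ`-module `M`: the element `n` acts by multiplication
by `(-1)^n`. -/
def signRep (M : Type) [AddCommGroup M] [Module ℤ M] :
    Representation ℤ (Multiplicative ℤ) M where
  toFun g := (((-1 : ℤˣ) ^ Multiplicative.toAdd g : ℤˣ) : ℤ) • LinearMap.id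
  map_one' := by
    ext m
    simp
  map_mul' g h := by
    ext m
    simp [zpow_add, mul_smul]

namespace SignRepAux

open groupCohomology

noncomputable abbrev A := Rep.of (signRep ℤ)

/-- identity map from the carrier of `A` to `ℤ` -/
def v (m : A) : ℤ := m

/-- identity map from `ℤ` to the carrier of `A` -/
def toA (n : ℤ) : A := n

lemma v_inj {x y : A} (h : v x = v y) : x = y := h

lemma v_add (x y : A) : v (x + y) = v x + v y := rfl
lemma v_sub (x y : A) : v (x - y) = v x - v y := rfl
lemma v_zero : v 0 = 0 := rfl
lemma v_toA (n : ℤ) : v (toA n) = n := rfl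

lemma neg_one_zpow_odd {n : ℤ} (h : Odd n) : (-1 : ℤˣ) ^ n = -1 := by
  obtain ⟨k, rfl⟩ := h
  have he : Even (2 * k) := ⟨k, by ring⟩
  rw [zpow_add, zpow_one, Even.neg_one_zpow he, one_mul]

lemma rho_apply (n : ℤ) (m : A) :
    v (A.ρ (Multiplicative.ofAdd n) m) = (((-1 : ℤˣ) ^ n : ℤˣ) : ℤ) * v m := rfl

lemma rho_even {n : ℤ} (h : Even n) (m : A) :
    v (A.ρ (Multiplicative.ofAdd n) m) = v m := by
  rw [rho_apply, Even.neg_one_zpow h]; simp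

lemma rho_odd {n : ℤ} (h : Odd n) (m : A) :
    v (A.ρ (Multiplicative.ofAdd n) m) = -(v m) := by
  rw [rho_apply, neg_one_zpow_odd h]; simp

/-- parity indicator -/
def par (n : ℤ) : ℤ := if Even n then 0 else 1

noncomputable abbrev t : Multiplicative ℤ := Multiplicative.ofAdd 1

lemma cocycle_apply (f : cocycles₁ A) (n : ℤ) :
    v (f (Multiplicative.ofAdd n)) = par n * v (f t) := by
  have hmul := (mem_cocycles₁_iff (A := A) f).1 f.2
  have hinv : v (f t⁻¹) = v (f t) := by
    have h0 : v (A.ρ t (f t⁻¹)) = v (-(f t)) := congrArg v (cocycles₁_map_inv f t)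
    have h1 : v (A.ρ (Multiplicative.ofAdd 1) (f t⁻¹)) = -(v (f t⁻¹)) := rho_odd odd_one _
    have h2 : v (-(f t)) = -(v (f t)) := rfl
    rw [h1, h2] at h0
    omega
  induction n using Int.induction_on with
  | zero =>
      have : v (f 1) = 0 := congrArg v (cocycles₁_map_one f)
      simpa [par] using this
  | succ k ih =>
      have key : v (f (Multiplicative.ofAdd ((k : ℤ) + 1))) =
          v (A.ρ (Multiplicative.ofAdd (k : ℤ)) (f t)) + v (f (Multiplicative.ofAdd (k : ℤ))) :=
        congrArg v (hmul (Multiplicative.ofAdd (k : ℤ)) t)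
      rw [key, ih]
      rcases Int.even_or_odd k with h | h
      · rw [rho_even h]
        have h1 : ¬ Even ((k : ℤ) + 1) := by simpa [Int.even_add_one] using h
        simp [par, h, h1]
      · rw [rho_odd h]
        have h1 : ¬ Even (k : ℤ) := by simpa [Int.not_even_iff_odd] using h
        have h2 : Even ((k : ℤ) + 1) := by simpa [Int.even_add_one] using h1
        simp [par, h1, h2]
  | pred k ih =>
      have key : v (f (Multiplicative.ofAdd (-(k : ℤ) - 1))) =
          v (A.ρ (Multiplicative.ofAdd (-(k : ℤ))) (f t⁻¹)) + v (f (Multiplicative.ofAdd (-(k : ℤ)))) :=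
        congrArg v (hmul (Multiplicative.ofAdd (-(k : ℤ))) t⁻¹)
      rw [key]
      rcases Int.even_or_odd (-(k : ℤ)) with h | h
      · rw [rho_even h, hinv, ih]
        have h2 : ¬ Even (-(k : ℤ) - 1) := by
          rcases h with ⟨m, hm⟩
          rw [Int.not_even_iff_odd]
          exact ⟨m - 1, by omega⟩
        simp [par, h, h2]
      · rw [rho_odd h, hinv, ih]
        have h1 : ¬ Even (-(k : ℤ)) := by simpa [Int.not_even_iff_odd] using h
        have h2 : Even (-(k : ℤ) - 1) := by
          rcases h with ⟨m, hm⟩; exact ⟨m, by omega⟩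
        simp [par, h1, h2]

/-- the basic cocycle: parity -/
noncomputable def f₀ : cocycles₁ A :=
  ⟨fun g => toA (par (Multiplicative.toAdd g)), by
    refine (mem_cocycles₁_iff (A := A) _).2 fun g h => ?_
    refine v_inj ?_
    have hadd : v (A.ρ g (toA (par (Multiplicative.toAdd h))) + toA (par (Multiplicative.toAdd g)))
        = v (A.ρ (Multiplicative.ofAdd (Multiplicative.toAdd g)) (toA (par (Multiplicative.toAdd h))))
          + par (Multiplicative.toAdd g) := rfl
    have hlhs : v (toA (par (Multiplicative.toAdd (g * h)))) =
        par (Multiplicative.toAdd g + Multiplicative.toAdd h) := rfl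
    rw [hadd, hlhs]
    set a := Multiplicative.toAdd g
    set b := Multiplicative.toAdd h
    rcases Int.even_or_odd a with ha | ha
    · rw [rho_even ha, v_toA]
      rcases Int.even_or_odd b with hb | hb
      · have h2 : Even (a + b) := ha.add hb
        simp [par, ha, hb, h2]
      · have h1 : ¬ Even b := by simpa [Int.not_even_iff_odd] using hb
        have h2 : ¬ Even (a + b) := by
          simpa [Int.not_even_iff_odd] using ha.add_odd hb
        simp [par, ha, h1, h2]
    · rw [rho_odd ha, v_toA]
      have ha' : ¬ Even a := by simpa [Int.not_even_iff_odd] using ha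
      rcases Int.even_or_odd b with hb | hb
      · have h2 : ¬ Even (a + b) := by
          simpa [Int.not_even_iff_odd] using ha.add_even hb
        simp [par, ha', hb, h2]
      · have hb' : ¬ Even b := by simpa [Int.not_even_iff_odd] using hb
        have h2 : Even (a + b) := ha.add_odd hb
        simp [par, ha', hb', h2]⟩

lemma f₀_t : v (f₀ t) = 1 := by
  show par (Multiplicative.toAdd t) = 1
  simp [par]

/-- evaluation at t composed with reduction mod 2 -/
noncomputable def φ :
    @LinearMap ℤ ℤ _ _ (RingHom.id ℤ) (cocycles₁ A) (ZMod 2) _ _ (cocycles₁ A).module _ where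
  toFun f := ((v (f t) : ℤ) : ZMod 2)
  map_add' f g := by
    show ((v ((f + g) t) : ℤ) : ZMod 2) = ((v (f t) : ℤ) : ZMod 2) + ((v (g t) : ℤ) : ZMod 2)
    rw [show v ((f + g) t) = v (f t) + v (g t) from rfl]
    push_cast; ring
  map_smul' r f := by
    show ((v ((r • f) t) : ℤ) : ZMod 2) = (RingHom.id ℤ) r • ((v (f t) : ℤ) : ZMod 2)
    rw [show v ((r • f) t) = r * v (f t) from rfl]
    push_cast
    simp [zsmul_eq_mul]

lemma mem_cob_iff (f : cocycles₁ A) :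
    f ∈ LinearMap.range (shortComplexH1 A).moduleCatToCycles ↔ ∃ x : A, ∀ g, A.ρ g x - x = f g := by
  constructor
  · rintro ⟨x, rfl⟩
    exact ⟨x, fun g => rfl⟩
  · rintro ⟨x, hx⟩
    exact ⟨x, Subtype.ext (funext hx)⟩

lemma ker_φ : LinearMap.ker φ = LinearMap.range (shortComplexH1 A).moduleCatToCycles := by
  ext f
  rw [LinearMap.mem_ker]
  refine Iff.trans ?_ (mem_cob_iff f).symm
  constructor
  · intro hf
    have hf' : ((v (f t) : ℤ) : ZMod 2) = 0 := hf
    have h2 : (2 : ℤ) ∣ v (f t) := by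
      have := (ZMod.intCast_zmod_eq_zero_iff_dvd (v (f t)) 2).1 hf'
      exact_mod_cast this
    obtain ⟨k, hk⟩ := h2
    refine ⟨toA (-k), fun g => ?_⟩
    refine v_inj ?_
    rw [v_sub]
    have hg : g = Multiplicative.ofAdd (Multiplicative.toAdd g) := rfl
    rw [hg, cocycle_apply f, v_toA]
    rcases Int.even_or_odd (Multiplicative.toAdd g) with h | h
    · rw [rho_even h, v_toA]
      simp [par, h]
    · rw [rho_odd h, v_toA]
      have h' : ¬ Even (Multiplicative.toAdd g) := Int.not_even_iff_odd.2 h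
      simp [par, h']
      omega
  · rintro ⟨x, hx⟩
    have h1 : v (A.ρ t x - x) = v (f t) := congrArg v (hx t)
    rw [v_sub] at h1
    have h2 : v (A.ρ (Multiplicative.ofAdd 1) x) = -(v x) := rho_odd odd_one _
    show ((v (f t) : ℤ) : ZMod 2) = 0
    rw [ZMod.intCast_zmod_eq_zero_iff_dvd]
    refine ⟨-(v x), ?_⟩
    rw [h2] at h1
    omega

lemma surj_φ : Function.Surjective φ := by
  intro z
  fin_cases z
  · refine ⟨0, ?_⟩
    show ((v ((0 : cocycles₁ A) t) : ℤ) : ZMod 2) = 0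
    rw [show v ((0 : cocycles₁ A) t) = 0 from rfl]
    norm_num
  · refine ⟨f₀, ?_⟩
    show ((v (f₀ t) : ℤ) : ZMod 2) = 1
    rw [f₀_t]; norm_num

noncomputable def e : (shortComplexH1 A).moduleCatLeftHomologyData.H ≃ₗ[ℤ] ZMod 2 := by
  refine LinearEquiv.ofBijective (Submodule.liftQ (LinearMap.range (shortComplexH1 A).moduleCatToCycles) φ (le_of_eq ker_φ.symm)) ⟨?_, ?_⟩
  · rw [← LinearMap.ker_eq_bot]
    exact Submodule.ker_liftQ_eq_bot _ _ _ (le_of_eq ker_φ)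
  · intro z
    obtain ⟨f, hf⟩ := surj_φ z
    exact ⟨Submodule.Quotient.mk f, hf⟩

/-- An isomorphism in `ModuleCat ℤ` induces an `AddEquiv` of the carriers. -/
noncomputable def isoAddEquiv {X Y : ModuleCat ℤ} (i : X ≅ Y) : X ≃+ Y :=
  letI : Module ℤ ↑X := X.isModule
  letI : Module ℤ ↑Y := Y.isModule
  { toFun := i.hom
    invFun := i.inv
    left_inv := fun x => congrArg (fun (f : X ⟶ X) => f x) i.hom_inv_id
    right_inv := fun y => congrArg (fun (f : Y ⟶ Y) => f y) i.inv_hom_id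
    map_add' := fun x y => i.hom.hom.map_add x y }

end SignRepAux

/-- With `M = ℤ` carrying the sign action of `ℤ` (where `n` acts by `(-1)^n`),
the first group cohomology `H¹(ℤ, M)` is isomorphic, as an abelian group, to
`ℤ/2ℤ`. -/
theorem h1_of_sign_rep_int :
    Nonempty (groupCohomology (Rep.of (signRep ℤ)) 1 ≃+ ZMod 2) :=
  ⟨(SignRepAux.isoAddEquiv (groupCohomology.H1Iso (Rep.of (signRep ℤ)))).trans
    SignRepAux.e.toAddEquiv⟩
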